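/- Let Γ be a connected minimal elliptic weighted graph which is not a Du Val graph. Then every log discrepancy of Γ satisfies a_i < 1; equivalently, every codiscrepancy satisfies b_i > 0. -/

import Mathlib

open Finset

/-- A weighted graph: a finite vertex set `Fin n`, genera `g`, a symmetric integer
intersection matrix `M` with nonnegative off-diagonal entries and diagonal entries `≤ -1`
(the weight of vertex `i` is `-M i i`), and an external part consisting of `s` external
components with rational coefficients `0 < b j ≤ 1` and intersection numbers `t j i`. -/
structure WGraph where
  n : ℕ
  npos : 0 < n
  M : Matrix (Fin n) (Fin n) ℤ
  g : Fin n → ℕ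
  s : ℕ
  b : Fin s → ℚ
  t : Fin s → Fin n → ℕ
  symm : ∀ i k, M i k = M k i
  offdiag_nonneg : ∀ i k, i ≠ k → 0 ≤ M i k
  diag_le : ∀ i, M i i ≤ -1
  b_pos : ∀ j, 0 < b j
  b_le_one : ∀ j, b j ≤ 1

namespace WGraph

/-- The external contribution `c_i = ∑_j b_j t_{ji}`. -/
def extc (Γ : WGraph) (i : Fin Γ.n) : ℚ := ∑ j, Γ.b j * (Γ.t j i : ℚ)

/-- `Γ` is elliptic: its intersection matrix is negative definite. -/
def Elliptic (Γ : WGraph) : Prop :=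
  ∀ v : Fin Γ.n → ℝ, v ≠ 0 → ∑ i, ∑ k, v i * (Γ.M i k : ℝ) * v k < 0

/-- `Γ` is minimal: no vertex of genus `0` and weight `1`. -/
def IsMinimal (Γ : WGraph) : Prop := ∀ i, ¬ (Γ.g i = 0 ∧ Γ.M i i = -1)

/-- `Γ` is connected: the graph with an edge `{i,k}` whenever `M i k > 0` is connected. -/
def Connected (Γ : WGraph) : Prop :=
  (SimpleGraph.fromRel (fun i k : Fin Γ.n => 0 < Γ.M i k)).Connected

/-- `a` is the (unique, when `M` is invertible) system of log discrepancies of `Γ`: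
`∑_i a_i M_{ik} = (2 g_k − 2 − M_{kk}) + c_k + ∑_i M_{ik}` for all `k`. -/
def IsDiscr (Γ : WGraph) (a : Fin Γ.n → ℝ) : Prop :=
  ∀ k, ∑ i, a i * (Γ.M i k : ℝ) =
    (2 * (Γ.g k : ℝ) - 2 - (Γ.M k k : ℝ)) + (Γ.extc k : ℝ) + ∑ i, (Γ.M i k : ℝ)

/-- `Γ` is a Du Val graph: all genera `0`, all weights `2`, empty external contribution. -/
def DuVal (Γ : WGraph) : Prop :=
  ∀ i, Γ.g i = 0 ∧ Γ.M i i = -2 ∧ Γ.extc i = 0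

/-- The minimal log discrepancy `pld` of a system of log discrepancies `a`. -/
def pld (Γ : WGraph) (a : Fin Γ.n → ℝ) : ℝ :=
  Finset.univ.inf' ⟨⟨0, Γ.npos⟩, Finset.mem_univ _⟩ a

/-- `Γ'` is a subgraph of `Γ` via the injection `e` of vertex sets:
off-diagonal entries, weights, genera and external contributions of `Γ'` are dominated by
the corresponding ones of `Γ`. -/
def SubgraphVia (Γ' Γ : WGraph) (e : Fin Γ'.n → Fin Γ.n) : Prop :=
  Function.Injective e ∧
  (∀ i k : Fin Γ'.n, i ≠ k → Γ'.M i k ≤ Γ.M (e i) (e k)) ∧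
  (∀ i, Γ.M (e i) (e i) ≤ Γ'.M i i) ∧
  (∀ i, Γ'.g i ≤ Γ.g (e i)) ∧
  (∀ i, Γ'.extc i ≤ Γ.extc (e i))

/-- The subgraph `Γ'` (via `e`) differs from `Γ`. -/
def ProperVia (Γ' Γ : WGraph) (e : Fin Γ'.n → Fin Γ.n) : Prop :=
  ¬ (Function.Surjective e ∧
     (∀ i k : Fin Γ'.n, Γ'.M i k = Γ.M (e i) (e k)) ∧
     (∀ i, Γ'.g i = Γ.g (e i)) ∧
     (∀ i, Γ'.extc i = Γ.extc (e i)))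

end WGraph

/-- Order on coefficient tuples: `B ≤ B'` iff `B` is at least as long as `B'` and
coordinatewise `B j ≤ B' j` on the common indices. -/
def TupleLE {α : Type*} [LE α] {s t : ℕ} (B : Fin s → α) (B' : Fin t → α) : Prop :=
  ∃ h : t ≤ s, ∀ j : Fin t, B (Fin.castLE h j) ≤ B' j

/-- Strict order on coefficient tuples: `B < B'` iff `B ≤ B'` and moreover `B` is strictly
longer or some coordinate inequality is strict. -/
def TupleLT {α : Type*} [Preorder α] {s t : ℕ} (B : Fin s → α) (B' : Fin t → α) : Prop :=
  TupleLE B B' ∧ (t < s ∨ ∃ h : t ≤ s, ∃ j : Fin t, B (Fin.castLE h j) < B' j)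

/-- For a connected minimal elliptic weighted graph that is not Du Val,
every log discrepancy satisfies `a_i < 1` (equivalently, every codiscrepancy is `> 0`). -/
theorem log_discrepancy_lt_one (Γ : WGraph) (hconn : Γ.Connected) (hmin : Γ.IsMinimal)
    (hell : Γ.Elliptic) (hnotDuVal : ¬ Γ.DuVal)
    (a : Fin Γ.n → ℝ) (ha : Γ.IsDiscr a) :
    ∀ i, a i < 1 := by
  classical
  set bb : Fin Γ.n → ℝ := fun i => 1 - a i with hbbdef
  set dd : Fin Γ.n → ℝ := fun k => 2 * (Γ.g k : ℝ) - 2 - (Γ.M k k : ℝ) + (Γ.extc k : ℝ) with hdddef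
  have hc : ∀ k, (0:ℝ) ≤ ((Γ.extc k : ℚ) : ℝ) := by
    intro k
    have h0 : (0:ℚ) ≤ Γ.extc k :=
      Finset.sum_nonneg fun j _ => mul_nonneg (Γ.b_pos j).le (Nat.cast_nonneg _)
    exact_mod_cast h0
  have hMle2 : ∀ k, Γ.g k = 0 → Γ.M k k ≤ -2 := by
    intro k hg
    have h1 := Γ.diag_le k
    have h2 : Γ.M k k ≠ -1 := fun h => (hmin k) ⟨hg, h⟩
    omega
  have hdd : ∀ k, 0 ≤ dd k := by
    intro k
    have hck := hc k
    by_cases hg : Γ.g k = 0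
    · have h2 : (Γ.M k k : ℝ) ≤ -2 := by exact_mod_cast hMle2 k hg
      simp only [hdddef, hg, Nat.cast_zero]
      linarith
    · have hg1 : (1:ℝ) ≤ (Γ.g k : ℝ) := by
        exact_mod_cast Nat.one_le_iff_ne_zero.mpr hg
      have hM : (Γ.M k k : ℝ) ≤ -1 := by exact_mod_cast Γ.diag_le k
      simp only [hdddef]
      linarith
  have hbbM : ∀ k, ∑ i, bb i * (Γ.M i k : ℝ) = -(dd k) := by
    intro k
    have h := ha k
    calc ∑ i, bb i * (Γ.M i k : ℝ)
        = ∑ i, ((Γ.M i k : ℝ) - a i * (Γ.M i k : ℝ)) := by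
          apply Finset.sum_congr rfl
          intro i _
          simp only [hbbdef]
          ring
      _ = ∑ i, (Γ.M i k : ℝ) - ∑ i, a i * (Γ.M i k : ℝ) := Finset.sum_sub_distrib _ _
      _ = -(dd k) := by rw [h]; simp only [hdddef]; ring
  -- Step 1: all codiscrepancies are nonnegative.
  have hbb0 : ∀ i, 0 ≤ bb i := by
    by_contra hcon
    push_neg at hcon
    obtain ⟨i0, hi0⟩ := hcon
    set v : Fin Γ.n → ℝ := fun i => max (-(bb i)) 0 with hvdef
    have hvnn : ∀ i, 0 ≤ v i := fun i => le_max_right _ _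
    have hpos : 0 < v i0 := lt_of_lt_of_le (by linarith) (le_max_left _ _)
    have hvne : v ≠ 0 := by
      intro h
      have h0 : v i0 = 0 := by rw [h]; rfl
      linarith
    set p : Fin Γ.n → ℝ := fun i => max (bb i) 0 with hpdef
    have hpnn : ∀ i, 0 ≤ p i := fun i => le_max_right _ _
    have hvp : ∀ i, v i = p i - bb i := by
      intro i
      simp only [hvdef, hpdef]
      rcases le_total (bb i) 0 with h | h
      · rw [max_eq_left (by linarith), max_eq_right h]; ring
      · rw [max_eq_right (by linarith), max_eq_left h]; ring
    have hpv : ∀ i, p i * v i = 0 := by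
      intro i
      rcases le_total (bb i) 0 with h | h
      · simp only [hpdef]
        rw [max_eq_right h, zero_mul]
      · simp only [hvdef]
        rw [max_eq_right (by linarith : -(bb i) ≤ 0), mul_zero]
    have h1 : ∀ k, ∑ i, bb i * ((Γ.M i k : ℝ) * v k) = -(dd k) * v k := by
      intro k
      calc ∑ i, bb i * ((Γ.M i k : ℝ) * v k)
          = (∑ i, bb i * (Γ.M i k : ℝ)) * v k := by
            rw [Finset.sum_mul]
            apply Finset.sum_congr rfl
            intro i _
            ring
        _ = -(dd k) * v k := by rw [hbbM k]
    have hsplit : ∑ i, ∑ k, v i * (Γ.M i k : ℝ) * v k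
        = (∑ i, ∑ k, p i * (Γ.M i k : ℝ) * v k) + ∑ k, dd k * v k := by
      have e1 : ∑ i, ∑ k, v i * (Γ.M i k : ℝ) * v k
          = (∑ i, ∑ k, p i * (Γ.M i k : ℝ) * v k)
            - ∑ i, ∑ k, bb i * ((Γ.M i k : ℝ) * v k) := by
        rw [← Finset.sum_sub_distrib]
        apply Finset.sum_congr rfl
        intro i _
        rw [← Finset.sum_sub_distrib]
        apply Finset.sum_congr rfl
        intro k _
        rw [hvp i]
        ring
      rw [e1, Finset.sum_comm (f := fun i k => bb i * ((Γ.M i k : ℝ) * v k))]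
      have e2 : ∑ k, ∑ i, bb i * ((Γ.M i k : ℝ) * v k) = ∑ k, -(dd k * v k) := by
        apply Finset.sum_congr rfl
        intro k _
        rw [h1 k]
        ring
      rw [e2, Finset.sum_neg_distrib, sub_neg_eq_add]
    have hA : 0 ≤ ∑ i, ∑ k, p i * (Γ.M i k : ℝ) * v k := by
      apply Finset.sum_nonneg
      intro i _
      apply Finset.sum_nonneg
      intro k _
      by_cases hik : i = k
      · subst hik
        have : p i * (Γ.M i i : ℝ) * v i = (Γ.M i i : ℝ) * (p i * v i) := by ring
        rw [this, hpv i, mul_zero]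
      · have hM : (0:ℝ) ≤ (Γ.M i k : ℝ) := by exact_mod_cast Γ.offdiag_nonneg i k hik
        exact mul_nonneg (mul_nonneg (hpnn i) hM) (hvnn k)
    have hB : 0 ≤ ∑ k, dd k * v k :=
      Finset.sum_nonneg fun k _ => mul_nonneg (hdd k) (hvnn k)
    have := hell v hvne
    rw [hsplit] at this
    linarith
  -- Step 2: zero codiscrepancy propagates to neighbours, and forces dd = 0.
  have step : ∀ u, bb u = 0 →
      (∀ w, (SimpleGraph.fromRel (fun i k : Fin Γ.n => 0 < Γ.M i k)).Adj u w → bb w = 0)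
      ∧ dd u = 0 := by
    intro u hu
    have hsum := hbbM u
    have hterm : ∀ j ∈ Finset.univ, (0:ℝ) ≤ bb j * (Γ.M j u : ℝ) := by
      intro j _
      by_cases hj : j = u
      · subst hj
        rw [hu, zero_mul]
      · exact mul_nonneg (hbb0 j) (by exact_mod_cast Γ.offdiag_nonneg j u hj)
    have hle : ∑ j, bb j * (Γ.M j u : ℝ) ≤ 0 := by
      rw [hsum]
      linarith [hdd u]
    have hzero : ∑ j, bb j * (Γ.M j u : ℝ) = 0 :=
      le_antisymm hle (Finset.sum_nonneg hterm)
    have heach := (Finset.sum_eq_zero_iff_of_nonneg hterm).mp hzero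
    constructor
    · intro w hw
      rw [SimpleGraph.fromRel_adj] at hw
      obtain ⟨hne, hlt⟩ := hw
      have hMwu : 0 < Γ.M w u := by
        rcases hlt with h | h
        · rw [Γ.symm u w] at h; exact h
        · exact h
      have hMr : (0:ℝ) < (Γ.M w u : ℝ) := by exact_mod_cast hMwu
      have h0 := heach w (Finset.mem_univ w)
      rcases mul_eq_zero.mp h0 with h | h
      · exact h
      · exact absurd h (ne_of_gt hMr)
    · rw [hsum] at hzero
      linarith
  -- Step 3: somewhere dd is positive (since Γ is not Du Val).
  have hex : ∃ k, 0 < dd k := by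
    rw [WGraph.DuVal] at hnotDuVal
    push_neg at hnotDuVal
    obtain ⟨j, hj⟩ := hnotDuVal
    refine ⟨j, ?_⟩
    have hcj := hc j
    by_cases hg : Γ.g j = 0
    · have h2 : Γ.M j j ≤ -2 := hMle2 j hg
      by_cases hM : Γ.M j j = -2
      · have hce : Γ.extc j ≠ 0 := hj hg hM
        have hcq : (0:ℚ) ≤ Γ.extc j :=
          Finset.sum_nonneg fun j' _ => mul_nonneg (Γ.b_pos j').le (Nat.cast_nonneg _)
        have hcpos : (0:ℚ) < Γ.extc j := lt_of_le_of_ne hcq (Ne.symm hce)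
        have hcr : (0:ℝ) < ((Γ.extc j : ℚ) : ℝ) := by exact_mod_cast hcpos
        have hMr : (Γ.M j j : ℝ) = -2 := by exact_mod_cast hM
        simp only [hdddef, hg, Nat.cast_zero, hMr]
        linarith
      · have h3 : Γ.M j j ≤ -3 := by omega
        have h3r : (Γ.M j j : ℝ) ≤ -3 := by exact_mod_cast h3
        simp only [hdddef, hg, Nat.cast_zero]
        linarith
    · have hg1 : (1:ℝ) ≤ (Γ.g j : ℝ) := by
        exact_mod_cast Nat.one_le_iff_ne_zero.mpr hg
      have hM : (Γ.M j j : ℝ) ≤ -1 := by exact_mod_cast Γ.diag_le j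
      simp only [hdddef]
      linarith
  obtain ⟨k, hk⟩ := hex
  -- Step 4: conclude.
  intro i
  by_contra hai
  push_neg at hai
  have hbbi : bb i = 0 := le_antisymm (by simp only [hbbdef]; linarith) (hbb0 i)
  have walkzero : ∀ (u w : Fin Γ.n),
      (SimpleGraph.fromRel (fun i k : Fin Γ.n => 0 < Γ.M i k)).Walk u w →
      bb u = 0 → bb w = 0 := by
    intro u w q
    induction q with
    | nil => exact id
    | @cons x y z h q' ih => intro hx; exact ih ((step x hx).1 y h)
  have hreach : (SimpleGraph.fromRel (fun i k : Fin Γ.n => 0 < Γ.M i k)).Reachable i k :=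
    hconn.preconnected i k
  obtain ⟨q⟩ := hreach
  have hbbk : bb k = 0 := walkzero i k q hbbi
  have hddk : dd k = 0 := (step k hbbk).2
  linarith
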